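/- (Algebraic core of Theorem 3 of the paper.) Let α, β, γ, δ, k be real numbers with α·δ − β·γ ≠ 0, let n be a natural number, let c : ℝ → ℝ be a function, define ψ̃(t) := (α·t + β)/(γ·t + δ), and define φ : ℝ × ℝ → ℝ × ℝ by φ(t,s) := (ψ̃(t), k·(γ·t + δ)^n·s + c(t)). Suppose there is an infinite set T ⊆ ℝ such that for every t ∈ T one has γ·t + δ ≠ 0, γ·ψ̃(t) + δ ≠ 0, and φ(φ(t,s)) = (t,s) for every s ∈ ℝ. Then either (I) α = −δ and k²·(β·γ + δ²)^n = 1, or (II) α = δ, β = 0, γ = 0, and k²·δ^(2n) = 1. -/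

import Mathlib

/-- The real Möbius transformation `ψ̃(t) = (αt+β)/(γt+δ)`. -/
noncomputable def mobiusFun (α β γ δ : ℝ) (t : ℝ) : ℝ := (α * t + β) / (γ * t + δ)

/-- The planar transformation `φ(t,s) = (ψ̃(t), k(γt+δ)ⁿ s + c(t))` associated with
an affine mapping of a rational ruled surface. -/
noncomputable def phiMap (α β γ δ k : ℝ) (n : ℕ) (c : ℝ → ℝ) (ts : ℝ × ℝ) : ℝ × ℝ :=
  (mobiusFun α β γ δ ts.1, k * (γ * ts.1 + δ) ^ n * ts.2 + c ts.1)

lemma quad_zero (a b c : ℝ) (T : Set ℝ) (hT : T.Infinite)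
    (h : ∀ t ∈ T, a * t ^ 2 + b * t + c = 0) : a = 0 ∧ b = 0 ∧ c = 0 := by
  have hp : (Polynomial.C a * Polynomial.X ^ 2 + Polynomial.C b * Polynomial.X
      + Polynomial.C c : Polynomial ℝ) = 0 := by
    apply Polynomial.eq_zero_of_infinite_isRoot
    apply hT.mono
    intro t ht
    simp [Set.mem_setOf_eq, Polynomial.IsRoot, h t ht]
  refine ⟨?_, ?_, ?_⟩
  · have := congrArg (fun p => Polynomial.coeff p 2) hp
    simpa using this
  · have := congrArg (fun p => Polynomial.coeff p 1) hp
    simpa using this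
  · have := congrArg (fun p => Polynomial.coeff p 0) hp
    simpa using this

/-- Algebraic core of Theorem 3 of the paper: if `φ` is an involution on an
infinite set of parameters, then either (I) `α = -δ` and `k²(βγ+δ²)ⁿ = 1`, or
(II) `α = δ`, `β = 0`, `γ = 0`, and `k²δ^(2n) = 1`. -/
theorem stmt_12 (α β γ δ k : ℝ) (h : α * δ - β * γ ≠ 0) (n : ℕ) (c : ℝ → ℝ)
    (T : Set ℝ) (hT : T.Infinite)
    (hcond : ∀ t ∈ T, γ * t + δ ≠ 0 ∧ γ * mobiusFun α β γ δ t + δ ≠ 0 ∧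
      ∀ s : ℝ, phiMap α β γ δ k n c (phiMap α β γ δ k n c (t, s)) = (t, s)) :
    (α = -δ ∧ k ^ 2 * (β * γ + δ ^ 2) ^ n = 1) ∨
    (α = δ ∧ β = 0 ∧ γ = 0 ∧ k ^ 2 * δ ^ (2 * n) = 1) := by
  -- Key per-point facts
  have key : ∀ t ∈ T, (γ * (α + δ) * t ^ 2 + (δ ^ 2 - α ^ 2) * t + (-(β * (α + δ))) = 0)
      ∧ k ^ 2 * ((α + δ) * γ * t + (β * γ + δ ^ 2)) ^ n = 1 := by
    intro t ht
    obtain ⟨hu, hv, hinv⟩ := hcond t ht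
    set u : ℝ := γ * t + δ with hu_def
    set ψ : ℝ := mobiusFun α β γ δ t with hψ_def
    -- u * v identity
    have huv : (γ * ψ + δ) * u = (α + δ) * γ * t + (β * γ + δ ^ 2) := by
      have hu' : γ * t + δ ≠ 0 := hu
      rw [hψ_def, mobiusFun, hu_def]
      field_simp
      ring
    -- first component of involution
    have h1 : mobiusFun α β γ δ ψ = t := by
      have := congrArg Prod.fst (hinv 0)
      simpa [phiMap] using this
    have hquad : γ * (α + δ) * t ^ 2 + (δ ^ 2 - α ^ 2) * t + (-(β * (α + δ))) = 0 := by
      have h1' : (α * ψ + β) = t * (γ * ψ + δ) := by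
        rw [mobiusFun] at h1
        rw [div_eq_iff hv] at h1
        linarith [h1]
      have hψval : ψ * u = α * t + β := by
        rw [hψ_def, mobiusFun]; exact div_mul_cancel₀ _ hu
      have := congrArg (· * u) h1'
      -- α*(αt+β) + β*u = t*((γψ+δ)*u)
      have h2 : α * (α * t + β) + β * u = t * ((α + δ) * γ * t + (β * γ + δ ^ 2)) := by
        calc α * (α * t + β) + β * u = (α * ψ + β) * u := by rw [← hψval]; ring
          _ = t * ((γ * ψ + δ) * u) := by rw [h1']; ring
          _ = _ := by rw [huv]
      rw [hu_def] at h2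
      nlinarith [h2]
    refine ⟨hquad, ?_⟩
    -- second component: k² (uv)^n = 1
    have e0 := congrArg Prod.snd (hinv 0)
    have e1 := congrArg Prod.snd (hinv 1)
    simp only [phiMap] at e0 e1
    have hk : k * (γ * ψ + δ) ^ n * (k * u ^ n) = 1 := by
      nlinarith [e0, e1]
    have : k ^ 2 * ((γ * ψ + δ) * u) ^ n = 1 := by
      rw [mul_pow]; nlinarith [hk]
    rwa [huv] at this
  obtain ⟨ha, hb, hc⟩ := quad_zero _ _ _ T hT (fun t ht => (key t ht).1)
  obtain ⟨t0, ht0⟩ := hT.nonempty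
  have hk0 := (key t0 ht0).2
  by_cases had : α + δ = 0
  · left
    constructor
    · linarith
    · rw [had] at hk0; simpa using hk0
  · right
    have hγ : γ = 0 := by
      rcases mul_eq_zero.mp (by linarith : γ * (α + δ) = 0) with h' | h'
      · exact h'
      · exact absurd h' had
    have hβ : β = 0 := by
      have : β * (α + δ) = 0 := by linarith
      rcases mul_eq_zero.mp this with h' | h'
      · exact h'
      · exact absurd h' had
    have hαδ : α = δ := by
      have h2 : δ ^ 2 - α ^ 2 = 0 := hb
      have : (δ - α) * (δ + α) = 0 := by ring_nf; nlinarith [h2]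
      rcases mul_eq_zero.mp this with h' | h'
      · linarith
      · exact absurd (by linarith) had
    refine ⟨hαδ, hβ, hγ, ?_⟩
    rw [hγ, hβ] at hk0
    simpa [pow_mul] using hk0
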